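/- Let G = GU(2,2;L) over a non-archimedean local field F, K^G = G(F) ∩ GL_4(𝔬_L), K^H = GSp_4(𝔬), P the Siegel-type non-abelian-radical maximal parabolic, and for m ≥ 0 let η_m be the unipotent matrix with (2,1)-entry αϖ^m and (3,4)-entry −ᾱϖ^m (identity elsewhere), and η_∞ = 1. Then the double cosets P(𝔬)η_m K^H for m ∈ {0,1,2,…,∞} are pairwise disjoint subsets of K^G. In particular, for g = p η_m k with p ∈ P(𝔬), k ∈ K^H, the minimum of the valuations of the (3,2)- and (3,4)-entries of gJ ^t g equals m plus a constant independent of p and k. -/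
import Mathlib


open Matrix

noncomputable section

/-- The form `J = [[0,1₂],[-1₂,0]]` over a field `L`. -/
def Jmat (L : Type*) [Field L] : Matrix (Fin 4) (Fin 4) L :=
  !![0, 0, 1, 0; 0, 0, 0, 1; -1, 0, 0, 0; 0, -1, 0, 0]

/-- The unipotent element `η_m`, with `(2,1)`-entry `αϖ^m` and `(3,4)`-entry `-ᾱϖ^m`. -/
def etaMat {L : Type*} [Field L] (σ : L →+* L) (α ϖ : L) (m : ℕ) :
    Matrix (Fin 4) (Fin 4) L :=
  !![1, 0, 0, 0;
     α * ϖ ^ m, 1, 0, 0;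
     0, 0, 1, -(σ α) * ϖ ^ m;
     0, 0, 0, 1]

/-- An element of `P(𝔬)` in the coordinates `m(ζ; a,b,c,d)·n(z)·n(x,y)` used in
Lemma `etamdisjointnesslemma`; here `ξ = ζ̄⁻¹` and `μ = ād - bc̄`. -/
def Pelt {L : Type*} [Field L] (σ : L →+* L) (ζ ξ a b c d z x y : L) :
    Matrix (Fin 4) (Fin 4) L :=
  !![ζ, 0, 0, 0; 0, a, 0, b; 0, 0, (σ a * d - b * σ c) * ξ, 0; 0, c, 0, d] *
  !![1, z, 0, 0; 0, 1, 0, 0; 0, 0, 1, 0; 0, 0, -(σ z), 1] *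
  !![1, 0, x, y; 0, 1, σ y, 0; 0, 0, 1, 0; 0, 0, 0, 1]

/-- The `P(𝔬)`-conditions on the coordinates: `ζ` a unit of `𝔬_L`, `ξ = ζ̄⁻¹`,
`a,b,c,d ∈ 𝔬_L` with `μ = ād - bc̄ ∈ 𝔬_L^×` and at least one of `a, c` a unit,
`z, y ∈ 𝔬_L`, `x ∈ 𝔬 = 𝔬_L ∩ F`. -/
def PIntegral {L : Type*} [Field L] (σ : L →+* L) (v : L → WithTop ℤ)
    (ζ ξ a b c d z x y : L) : Prop :=
  v ζ = 0 ∧ σ ζ * ξ = 1 ∧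
  0 ≤ v a ∧ 0 ≤ v b ∧ 0 ≤ v c ∧ 0 ≤ v d ∧
  min (v a) (v c) = 0 ∧ v (σ a * d - b * σ c) = 0 ∧
  0 ≤ v z ∧ 0 ≤ v y ∧ 0 ≤ v x ∧ σ x = x

/-- The `K^H = GSp₄(𝔬)`-conditions: entries in `𝔬 = 𝔬_L ∩ F`, and
`kJᵀk = μ(k)J` with `μ(k)` a unit. -/
def KHIntegral {L : Type*} [Field L] (σ : L →+* L) (v : L → WithTop ℤ)
    (k : Matrix (Fin 4) (Fin 4) L) : Prop :=
  (∀ i j, σ (k i j) = k i j) ∧ (∀ i j, 0 ≤ v (k i j)) ∧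
  ∃ μk : L, v μk = 0 ∧ k * Jmat L * kᵀ = μk • Jmat L

/-- Generic unipotent matrix with parameter `t` in place of `ϖ^m`. -/
def etaGen {L : Type*} [Field L] (σ : L →+* L) (α t : L) : Matrix (Fin 4) (Fin 4) L :=
  !![1, 0, 0, 0;
     α * t, 1, 0, 0;
     0, 0, 1, -(σ α) * t;
     0, 0, 0, 1]

lemma etaMat_eq_etaGen {L : Type*} [Field L] (σ : L →+* L) (α ϖ : L) (m : ℕ) :
    etaMat σ α ϖ m = etaGen σ α (ϖ ^ m) := rfl

lemma etaGen_zero {L : Type*} [Field L] (σ : L →+* L) (α : L) :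
    etaGen σ α 0 = 1 := by
  ext i j
  fin_cases i <;> fin_cases j <;> simp [etaGen, Matrix.one_apply, Matrix.vecHead, Matrix.vecTail]

lemma key21 {L : Type*} [Field L] (σ : L →+* L) (ζ ξ a b c d z x y α t : L) :
    ((Pelt σ ζ ξ a b c d z x y * etaGen σ α t) * Jmat L *
     (Pelt σ ζ ξ a b c d z x y * etaGen σ α t)ᵀ) 2 1
      = a * ((σ a * d - b * σ c) * ξ * (t * (σ α - α))) := by
  simp [Pelt, etaGen, Jmat, Matrix.mul_apply, Fin.sum_univ_four, Matrix.transpose_apply,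
    Matrix.vecHead, Matrix.vecTail]
  ring

lemma key23 {L : Type*} [Field L] (σ : L →+* L) (ζ ξ a b c d z x y α t : L) :
    ((Pelt σ ζ ξ a b c d z x y * etaGen σ α t) * Jmat L *
     (Pelt σ ζ ξ a b c d z x y * etaGen σ α t)ᵀ) 2 3
      = c * ((σ a * d - b * σ c) * ξ * (t * (σ α - α))) := by
  simp [Pelt, etaGen, Jmat, Matrix.mul_apply, Fin.sum_univ_four, Matrix.transpose_apply,
    Matrix.vecHead, Matrix.vecTail]
  ring

/-- Lemma `etamdisjointnesslemma` i): the double cosets `P(𝔬)η_m K^H ⊆ K^G` are pairwise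
disjoint, because for `g = p η_m k` the minimum of the valuations of the `(3,2)`- and
`(3,4)`-entries of `gJᵀg` equals `m·v(ϖ)` plus the constant `v(ᾱ - α)`, independent of
`p` and `k`; moreover `P(𝔬)K^H` (the case `m = ∞`) is disjoint from all of these. -/

theorem etam_double_cosets_disjoint {L : Type*} [Field L]
    (σ : L →+* L) (hσ : ∀ x, σ (σ x) = x)
    (v : L → WithTop ℤ)
    (hv0 : ∀ x, v x = ⊤ ↔ x = 0)
    (hvm : ∀ x y, v (x * y) = v x + v y)
    (hva : ∀ x y, min (v x) (v y) ≤ v (x + y))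
    (hv1 : v 1 = 0)
    (hvσ : ∀ x, v (σ x) = v x)
    (α ϖ : L) (e : ℤ) (he : 0 < e) (hϖ : v ϖ = (e : WithTop ℤ)) (hϖF : σ ϖ = ϖ)
    (c₀ : ℤ) (hα : v (σ α - α) = (c₀ : WithTop ℤ)) :
    -- the valuation formula
    (∀ (m : ℕ) (ζ ξ a b c d z x y : L) (k : Matrix (Fin 4) (Fin 4) L),
      PIntegral σ v ζ ξ a b c d z x y → KHIntegral σ v k →
      (let g := Pelt σ ζ ξ a b c d z x y * etaMat σ α ϖ m * k
       min (v ((g * Jmat L * gᵀ) 2 1)) (v ((g * Jmat L * gᵀ) 2 3))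
         = ((m : ℤ) * e + c₀ : ℤ))) ∧
    -- pairwise disjointness of the double cosets `P(𝔬)η_m K^H`, `m ∈ {0,1,2,…}`
    (∀ (m m' : ℕ) (ζ ξ a b c d z x y ζ' ξ' a' b' c' d' z' x' y' : L)
      (k k' : Matrix (Fin 4) (Fin 4) L),
      PIntegral σ v ζ ξ a b c d z x y → KHIntegral σ v k →
      PIntegral σ v ζ' ξ' a' b' c' d' z' x' y' → KHIntegral σ v k' →
      Pelt σ ζ ξ a b c d z x y * etaMat σ α ϖ m * k
        = Pelt σ ζ' ξ' a' b' c' d' z' x' y' * etaMat σ α ϖ m' * k' →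
      m = m') ∧
    -- disjointness from the coset `P(𝔬)η_∞K^H = P(𝔬)K^H`
    (∀ (m : ℕ) (ζ ξ a b c d z x y ζ' ξ' a' b' c' d' z' x' y' : L)
      (k k' : Matrix (Fin 4) (Fin 4) L),
      PIntegral σ v ζ ξ a b c d z x y → KHIntegral σ v k →
      PIntegral σ v ζ' ξ' a' b' c' d' z' x' y' → KHIntegral σ v k' →
      Pelt σ ζ ξ a b c d z x y * etaMat σ α ϖ m * k
        ≠ Pelt σ ζ' ξ' a' b' c' d' z' x' y' * k') := by

  -- valuation of `ξ` is 0
  have vxi : ∀ ζ ξ : L, v ζ = 0 → σ ζ * ξ = 1 → v ξ = 0 := by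
    intro ζ ξ hζ h
    have h1 : v (σ ζ * ξ) = 0 := by rw [h, hv1]
    rw [hvm, hvσ, hζ, zero_add] at h1
    exact h1
  -- valuation of `ϖ ^ m`
  have vpow : ∀ m : ℕ, v (ϖ ^ m) = (((m : ℤ) * e : ℤ) : WithTop ℤ) := by
    intro m
    induction m with
    | zero => simpa using hv1
    | succ n ih =>
        rw [pow_succ, hvm, ih, hϖ]
        have : ((n : ℤ) * e : ℤ) + (e : ℤ) = (((n : ℕ) + 1 : ℤ) * e : ℤ) := by ring
        norm_cast
  -- conjugation by `k` just multiplies by the unit `μk`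
  have conj : ∀ (q k : Matrix (Fin 4) (Fin 4) L) (μk : L),
      k * Jmat L * kᵀ = μk • Jmat L →
      (q * k) * Jmat L * (q * k)ᵀ = μk • (q * Jmat L * qᵀ) := by
    intro q k μk hk
    calc (q * k) * Jmat L * (q * k)ᵀ
        = q * (k * Jmat L * kᵀ) * qᵀ := by
          simp only [Matrix.transpose_mul, Matrix.mul_assoc]
      _ = q * (μk • Jmat L) * qᵀ := by rw [hk]
      _ = μk • (q * Jmat L * qᵀ) := by
          simp only [Matrix.mul_smul, Matrix.smul_mul]
  -- the main valuation formula
  have H : ∀ (m : ℕ) (ζ ξ a b c d z x y : L) (k : Matrix (Fin 4) (Fin 4) L),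
      PIntegral σ v ζ ξ a b c d z x y → KHIntegral σ v k →
      min (v (((Pelt σ ζ ξ a b c d z x y * etaMat σ α ϖ m * k) * Jmat L *
                (Pelt σ ζ ξ a b c d z x y * etaMat σ α ϖ m * k)ᵀ) 2 1))
          (v (((Pelt σ ζ ξ a b c d z x y * etaMat σ α ϖ m * k) * Jmat L *
                (Pelt σ ζ ξ a b c d z x y * etaMat σ α ϖ m * k)ᵀ) 2 3))
        = (((m : ℤ) * e + c₀ : ℤ) : WithTop ℤ) := by
    intro m ζ ξ a b c d z x y k hP hK
    obtain ⟨hζ, hζξ, hva', hvb, hvc', hvd, hmin, hμ, hz, hy, hx, hxσ⟩ := hP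
    obtain ⟨hksym, hkint, μk, hμk, hJk⟩ := hK
    have hconj := conj (Pelt σ ζ ξ a b c d z x y * etaMat σ α ϖ m) k μk hJk
    rw [hconj]
    have hξ0 := vxi ζ ξ hζ hζξ
    set R : L := (σ a * d - b * σ c) * ξ * (ϖ ^ m * (σ α - α)) with hR
    have hvR : v R = (((m : ℤ) * e + c₀ : ℤ) : WithTop ℤ) := by
      rw [hR, hvm, hvm, hvm, hμ, hξ0, vpow, hα]
      have : (((m : ℤ) * e : ℤ) : WithTop ℤ) + ((c₀ : ℤ) : WithTop ℤ)
          = (((m : ℤ) * e + c₀ : ℤ) : WithTop ℤ) := by norm_cast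
      rw [zero_add, zero_add, this]
    have e21 : (μk • (Pelt σ ζ ξ a b c d z x y * etaMat σ α ϖ m * Jmat L *
        (Pelt σ ζ ξ a b c d z x y * etaMat σ α ϖ m)ᵀ)) 2 1 = μk * (a * R) := by
      rw [Matrix.smul_apply, smul_eq_mul, etaMat_eq_etaGen, key21]
    have e23 : (μk • (Pelt σ ζ ξ a b c d z x y * etaMat σ α ϖ m * Jmat L *
        (Pelt σ ζ ξ a b c d z x y * etaMat σ α ϖ m)ᵀ)) 2 3 = μk * (c * R) := by
      rw [Matrix.smul_apply, smul_eq_mul, etaMat_eq_etaGen, key23]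
    have va21 : v (μk * (a * R)) = v a + (((m : ℤ) * e + c₀ : ℤ) : WithTop ℤ) := by
      rw [hvm, hvm, hμk, hvR, zero_add]
    have va23 : v (μk * (c * R)) = v c + (((m : ℤ) * e + c₀ : ℤ) : WithTop ℤ) := by
      rw [hvm, hvm, hμk, hvR, zero_add]
    rw [e21, e23, va21, va23, min_add_add_right, hmin, zero_add]
  refine ⟨fun m ζ ξ a b c d z x y k hP hK => H m ζ ξ a b c d z x y k hP hK, ?_, ?_⟩
  · -- pairwise disjointness for finite m, m'
    intro m m' ζ ξ a b c d z x y ζ' ξ' a' b' c' d' z' x' y' k k' hP hK hP' hK' heq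
    have h1 := H m ζ ξ a b c d z x y k hP hK
    have h2 := H m' ζ' ξ' a' b' c' d' z' x' y' k' hP' hK'
    rw [heq] at h1
    rw [h1] at h2
    have h3 : (m : ℤ) * e + c₀ = (m' : ℤ) * e + c₀ := by exact_mod_cast h2
    have h4 : (m : ℤ) * e = (m' : ℤ) * e := by omega
    have h5 : (m : ℤ) = (m' : ℤ) := mul_right_cancel₀ (by exact_mod_cast he.ne') h4
    exact_mod_cast h5
  · -- disjointness from `P(𝔬)K^H`
    intro m ζ ξ a b c d z x y ζ' ξ' a' b' c' d' z' x' y' k k' hP hK hP' hK' heq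
    have h1 := H m ζ ξ a b c d z x y k hP hK
    rw [heq] at h1
    obtain ⟨_, _, _, _, _, _, _, _, _, _, _, _⟩ := hP'
    obtain ⟨_, _, μk', hμk', hJk'⟩ := hK'
    have hconj := conj (Pelt σ ζ' ξ' a' b' c' d' z' x' y') k' μk' hJk'
    rw [hconj] at h1
    have e21 : (μk' • (Pelt σ ζ' ξ' a' b' c' d' z' x' y' * Jmat L *
        (Pelt σ ζ' ξ' a' b' c' d' z' x' y')ᵀ)) 2 1 = 0 := by
      have := key21 σ ζ' ξ' a' b' c' d' z' x' y' α 0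
      rw [etaGen_zero, Matrix.mul_one] at this
      rw [Matrix.smul_apply, smul_eq_mul, this]
      ring
    have e23 : (μk' • (Pelt σ ζ' ξ' a' b' c' d' z' x' y' * Jmat L *
        (Pelt σ ζ' ξ' a' b' c' d' z' x' y')ᵀ)) 2 3 = 0 := by
      have := key23 σ ζ' ξ' a' b' c' d' z' x' y' α 0
      rw [etaGen_zero, Matrix.mul_one] at this
      rw [Matrix.smul_apply, smul_eq_mul, this]
      ring
    have hv0' : v (0 : L) = ⊤ := (hv0 0).mpr rfl
    rw [e21, e23, hv0', min_self] at h1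
    have : (((m : ℤ) * e + c₀ : ℤ) : WithTop ℤ) ≠ ⊤ := by
      exact_mod_cast WithTop.coe_ne_top
    exact this h1.symm


end
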